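/- Let A and B be injective unilateral (forward) weighted shifts on H with positive nonzero weight sequences. If A and B are quasi-similar, then A and B are similar. -/

import Mathlib

set_option linter.unusedSectionVars false
set_option synthInstance.maxHeartbeats 1000000
set_option maxHeartbeats 1000000

open scoped InnerProductSpace ENNReal

section Aux
variable {H : Type*} [NormedAddCommGroup H] [InnerProductSpace ℂ H] [CompleteSpace H]

/-- extension by density for continuous linear maps agreeing on the orthonormal family -/
lemma aux_ext {F : Type*} [NormedAddCommGroup F] [NormedSpace ℂ F]
    (e : ℕ → H) (hdense : (Submodule.span ℂ (Set.range e)).topologicalClosure = ⊤)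
    (f g : H →L[ℂ] F) (h : ∀ n, f (e n) = g (e n)) : f = g := by
  refine ContinuousLinearMap.ext_on
    (Submodule.dense_iff_topologicalClosure_eq_top.mpr hdense) ?_
  rintro - ⟨n, rfl⟩
  exact h n

/-- adjoint-type action on inner products with basis vectors -/
lemma aux_shift (e : ℕ → H) (he : Orthonormal ℂ e)
    (hdense : (Submodule.span ℂ (Set.range e)).topologicalClosure = ⊤)
    (a : ℕ → ℝ) (A : H →L[ℂ] H) (hA : ∀ n, A (e n) = (a n : ℂ) • e (n + 1)) :
    (∀ v, ⟪e 0, A v⟫_ℂ = 0) ∧ ∀ m v, ⟪e (m+1), A v⟫_ℂ = (a m : ℂ) * ⟪e m, v⟫_ℂ := by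
  have hie : ∀ i j, ⟪e i, e j⟫_ℂ = if i = j then 1 else 0 := orthonormal_iff_ite.mp he
  constructor
  · have : innerSL ℂ (e 0) ∘L A = 0 := by
      refine aux_ext e hdense _ _ fun n => ?_
      simp only [ContinuousLinearMap.comp_apply, ContinuousLinearMap.zero_apply, innerSL_apply_apply,
        hA n, inner_smul_right, hie]
      rw [if_neg (by omega)]; ring
    intro v
    simpa using congrFun (congrArg (fun T => (T : H →L[ℂ] ℂ) ∘ id) this) v
  · intro m
    have : innerSL ℂ (e (m+1)) ∘L A = (a m : ℂ) • innerSL ℂ (e m) := by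
      refine aux_ext e hdense _ _ fun n => ?_
      simp only [ContinuousLinearMap.comp_apply, ContinuousLinearMap.smul_apply, innerSL_apply_apply,
        hA n, inner_smul_right, hie]
      by_cases h : m = n
      · subst h; simp
      · simp [h, fun hh => h (Nat.succ_injective hh)]
    intro v
    have := congrArg (fun T => (T : H →L[ℂ] ℂ) v) this
    simpa using this
end Aux

section Aux2
variable {H : Type*} [NormedAddCommGroup H] [InnerProductSpace ℂ H] [CompleteSpace H]

lemma aux_key (e : ℕ → H) (he : Orthonormal ℂ e)
    (hdense : (Submodule.span ℂ (Set.range e)).topologicalClosure = ⊤)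
    (a b : ℕ → ℝ) (ha : ∀ n, 0 < a n) (hb : ∀ n, 0 < b n)
    (A B : H →L[ℂ] H)
    (hA : ∀ n, A (e n) = (a n : ℂ) • e (n + 1))
    (hB : ∀ n, B (e n) = (b n : ℂ) • e (n + 1))
    (X : H →L[ℂ] H) (hXdr : DenseRange X) (hXint : A ∘L X = X ∘L B) :
    ∃ c : ℝ, 0 < c ∧ ∀ n,
      c * (∏ k ∈ Finset.range n, a k) ≤ ‖X‖ * ∏ k ∈ Finset.range n, b k := by
  obtain ⟨hA0, hAm⟩ := aux_shift e he hdense a A hA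
  have hrel : ∀ n, A (X (e n)) = (b n : ℂ) • X (e (n + 1)) := by
    intro n
    have h := ContinuousLinearMap.ext_iff.mp hXint (e n)
    simpa [hB n] using h
  have hzero : ∀ n, ⟪e 0, X (e (n + 1))⟫_ℂ = 0 := by
    intro n
    have h1 : (0 : ℂ) = (b n : ℂ) * ⟪e 0, X (e (n + 1))⟫_ℂ := by
      rw [← inner_smul_right, ← hrel n, hA0]
    rcases mul_eq_zero.mp h1.symm with h | h
    · exact absurd h (by exact_mod_cast (hb n).ne')
    · exact h
  set x : ℕ → ℂ := fun n => ⟪e n, X (e n)⟫_ℂ with hxdef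
  have hcne : x 0 ≠ 0 := by
    intro h0
    have hall : ∀ n, ⟪e 0, X (e n)⟫_ℂ = 0 := by
      intro n; cases n with
      | zero => exact h0
      | succ m => exact hzero m
    have hT : innerSL ℂ (e 0) ∘L X = 0 :=
      aux_ext e hdense _ _ (by intro n; simpa using hall n)
    have h2 : (fun w : H => ⟪e 0, w⟫_ℂ) = fun _ => 0 := by
      refine Continuous.ext_on hXdr (innerSL ℂ (e 0)).continuous continuous_const ?_
      rintro - ⟨v, rfl⟩
      simpa using ContinuousLinearMap.ext_iff.mp hT v
    have h3 : ⟪e 0, e 0⟫_ℂ = 0 := congrFun h2 (e 0)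
    rw [inner_self_eq_zero] at h3
    have := he.1 0
    rw [h3] at this; simp at this
  have hx : ∀ n, (b n : ℂ) * x (n + 1) = (a n : ℂ) * x n := by
    intro n
    have h1 := hAm n (X (e n))
    rw [hrel n, inner_smul_right] at h1
    exact h1
  have hdiag : ∀ n, (∏ k ∈ Finset.range n, (b k : ℂ)) * x n
      = (∏ k ∈ Finset.range n, (a k : ℂ)) * x 0 := by
    intro n
    induction n with
    | zero => simp
    | succ m ih =>
      rw [Finset.prod_range_succ, Finset.prod_range_succ]
      calc (∏ k ∈ Finset.range m, (b k : ℂ)) * (b m : ℂ) * x (m + 1)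
          = (∏ k ∈ Finset.range m, (b k : ℂ)) * ((b m : ℂ) * x (m + 1)) := by ring
        _ = (∏ k ∈ Finset.range m, (b k : ℂ)) * ((a m : ℂ) * x m) := by rw [hx m]
        _ = (a m : ℂ) * ((∏ k ∈ Finset.range m, (b k : ℂ)) * x m) := by ring
        _ = (a m : ℂ) * ((∏ k ∈ Finset.range m, (a k : ℂ)) * x 0) := by rw [ih]
        _ = (∏ k ∈ Finset.range m, (a k : ℂ)) * (a m : ℂ) * x 0 := by ring
  have hxbound : ∀ n, ‖x n‖ ≤ ‖X‖ := by
    intro n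
    calc ‖x n‖ ≤ ‖e n‖ * ‖X (e n)‖ := norm_inner_le_norm _ _
      _ ≤ ‖e n‖ * (‖X‖ * ‖e n‖) := by
          gcongr; exact X.le_opNorm _
      _ = ‖X‖ := by rw [he.1 n]; simp
  refine ⟨‖x 0‖, norm_pos_iff.mpr hcne, fun n => ?_⟩
  have hpa : (0:ℝ) ≤ ∏ k ∈ Finset.range n, a k :=
    Finset.prod_nonneg fun k _ => (ha k).le
  have hpb : (0:ℝ) ≤ ∏ k ∈ Finset.range n, b k :=
    Finset.prod_nonneg fun k _ => (hb k).le
  have h1 : ‖x 0‖ * (∏ k ∈ Finset.range n, a k)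
      = (∏ k ∈ Finset.range n, b k) * ‖x n‖ := by
    have := congrArg norm (hdiag n)
    rw [norm_mul, norm_mul] at this
    have hna : ‖∏ k ∈ Finset.range n, (a k : ℂ)‖ = ∏ k ∈ Finset.range n, a k := by
      push_cast [← Complex.ofReal_prod]
      rw [Complex.norm_real, Real.norm_eq_abs, abs_of_nonneg hpa]
    have hnb : ‖∏ k ∈ Finset.range n, (b k : ℂ)‖ = ∏ k ∈ Finset.range n, b k := by
      push_cast [← Complex.ofReal_prod]
      rw [Complex.norm_real, Real.norm_eq_abs, abs_of_nonneg hpb]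
    rw [hna, hnb] at this
    linarith [this]
  calc ‖x 0‖ * (∏ k ∈ Finset.range n, a k)
      = (∏ k ∈ Finset.range n, b k) * ‖x n‖ := h1
    _ ≤ (∏ k ∈ Finset.range n, b k) * ‖X‖ := by gcongr; exact hxbound n
    _ = ‖X‖ * ∏ k ∈ Finset.range n, b k := by ring

end Aux2

section Aux3

lemma aux_memlp (r : ℕ → ℝ) (M : ℝ) (hM : ∀ n, |r n| ≤ M)
    (f : lp (fun _ : ℕ => ℂ) 2) : Memℓp (fun n => (r n : ℂ) * f n) 2 := by
  have h2 : ((2 : ℝ≥0∞).toReal) = (2 : ℝ) := by norm_num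
  apply memℓp_gen
  rw [h2]
  have hs : Summable fun n => M ^ (2:ℝ) * ‖f n‖ ^ (2:ℝ) := by
    exact ((lp.memℓp f).summable (by rw [h2]; norm_num)).mul_left _ |>.congr (fun n => by rw [h2])
  refine Summable.of_nonneg_of_le (fun n => Real.rpow_nonneg (norm_nonneg _) _) (fun n => ?_) hs
  have hb : ‖(r n : ℂ) * f n‖ ≤ M * ‖f n‖ := by
    rw [norm_mul, Complex.norm_real, Real.norm_eq_abs]
    gcongr
    exact hM n
  calc ‖(r n : ℂ) * f n‖ ^ (2:ℝ) ≤ (M * ‖f n‖) ^ (2:ℝ) :=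
        Real.rpow_le_rpow (norm_nonneg _) hb (by norm_num)
    _ = M ^ (2:ℝ) * ‖f n‖ ^ (2:ℝ) :=
        Real.mul_rpow ((abs_nonneg (r 0)).trans (hM 0)) (norm_nonneg _)

lemma aux_diag (r : ℕ → ℝ) (M : ℝ) (hM : ∀ n, |r n| ≤ M) :
    ∃ D : lp (fun _ : ℕ => ℂ) 2 →L[ℂ] lp (fun _ : ℕ => ℂ) 2,
      ∀ f n, (D f : ∀ _ : ℕ, ℂ) n = (r n : ℂ) * f n := by
  have hM0 : 0 ≤ M := (abs_nonneg (r 0)).trans (hM 0)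
  have h2 : ((2 : ℝ≥0∞).toReal) = (2 : ℝ) := by norm_num
  set L : lp (fun _ : ℕ => ℂ) 2 →ₗ[ℂ] lp (fun _ : ℕ => ℂ) 2 :=
    { toFun := fun f => ⟨fun n => (r n : ℂ) * f n, aux_memlp r M hM f⟩
      map_add' := fun f g => by ext n; simp [mul_add]; rfl
      map_smul' := fun c f => by ext n; simp; ring } with hL
  have hbound : ∀ f, ‖L f‖ ≤ M * ‖f‖ := by
    intro f
    refine lp.norm_le_of_forall_sum_le (by rw [h2]; norm_num)
      (mul_nonneg hM0 (norm_nonneg f)) (fun s => ?_)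
    rw [h2]
    calc ∑ i ∈ s, ‖(L f : ∀ _ : ℕ, ℂ) i‖ ^ (2:ℝ)
        ≤ ∑ i ∈ s, M ^ (2:ℝ) * ‖f i‖ ^ (2:ℝ) := by
          refine Finset.sum_le_sum fun i _ => ?_
          have hb : ‖(L f : ∀ _ : ℕ, ℂ) i‖ ≤ M * ‖f i‖ := by
            show ‖(r i : ℂ) * f i‖ ≤ M * ‖f i‖
            rw [norm_mul, Complex.norm_real, Real.norm_eq_abs]
            gcongr
            exact hM i
          calc ‖(L f : ∀ _ : ℕ, ℂ) i‖ ^ (2:ℝ) ≤ (M * ‖f i‖) ^ (2:ℝ) :=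
                Real.rpow_le_rpow (norm_nonneg _) hb (by norm_num)
            _ = M ^ (2:ℝ) * ‖f i‖ ^ (2:ℝ) := Real.mul_rpow hM0 (norm_nonneg _)
      _ = M ^ (2:ℝ) * ∑ i ∈ s, ‖f i‖ ^ (2:ℝ) := by rw [Finset.mul_sum]
      _ ≤ M ^ (2:ℝ) * ‖f‖ ^ (2:ℝ) := by
          refine mul_le_mul_of_nonneg_left ?_ (Real.rpow_nonneg hM0 _)
          have := lp.sum_rpow_le_norm_rpow (p := 2) (by rw [h2]; norm_num) f s
          rw [h2] at this
          exact this
      _ = (M * ‖f‖) ^ (2:ℝ) := (Real.mul_rpow hM0 (norm_nonneg f)).symm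
  exact ⟨L.mkContinuous M hbound, fun f n => rfl⟩

end Aux3

/-- Two injective unilateral (forward) weighted shifts with positive weight
sequences that are quasi-similar are similar. -/
theorem stmt13 {H : Type*} [NormedAddCommGroup H] [InnerProductSpace ℂ H] [CompleteSpace H]
    (e : ℕ → H) (he : Orthonormal ℂ e)
    (hdense : (Submodule.span ℂ (Set.range e)).topologicalClosure = ⊤)
    (a b : ℕ → ℝ) (ha : ∀ n, 0 < a n) (hb : ∀ n, 0 < b n)
    (A B : H →L[ℂ] H)
    (hA : ∀ n, A (e n) = (a n : ℂ) • e (n + 1))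
    (hB : ∀ n, B (e n) = (b n : ℂ) • e (n + 1))
    (X Y : H →L[ℂ] H)
    (hXinj : Function.Injective X) (hXdr : DenseRange X)
    (hYinj : Function.Injective Y) (hYdr : DenseRange Y)
    (hXint : A ∘L X = X ∘L B) (hYint : Y ∘L A = B ∘L Y) :
    ∃ V : H ≃L[ℂ] H, (V : H →L[ℂ] H) ∘L A = B ∘L (V : H →L[ℂ] H) := by
  classical
  obtain ⟨c1, hc1, hX1⟩ := aux_key e he hdense a b ha hb A B hA hB X hXdr hXint
  obtain ⟨c2, hc2, hY1⟩ := aux_key e he hdense b a hb ha B A hB hA Y hYdr hYint.symm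
  set α : ℕ → ℝ := fun n => ∏ k ∈ Finset.range n, a k with hα
  set β : ℕ → ℝ := fun n => ∏ k ∈ Finset.range n, b k with hβ
  have hαpos : ∀ n, 0 < α n := fun n => Finset.prod_pos fun k _ => ha k
  have hβpos : ∀ n, 0 < β n := fun n => Finset.prod_pos fun k _ => hb k
  set r : ℕ → ℝ := fun n => β n / α n with hr
  have hrpos : ∀ n, 0 < r n := fun n => div_pos (hβpos n) (hαpos n)
  have hXpos : 0 < ‖X‖ := by
    have := hX1 0; simp [hα, hβ] at this; linarith
  have hYpos : 0 < ‖Y‖ := by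
    have := hY1 0; simp [hα, hβ] at this; linarith
  have hub : ∀ n, |r n| ≤ ‖Y‖ / c2 := by
    intro n
    rw [abs_of_pos (hrpos n), hr]
    rw [div_le_div_iff₀ (hαpos n) hc2]
    have := hY1 n
    nlinarith [hαpos n, hβpos n]
  have hub' : ∀ n, |(r n)⁻¹| ≤ ‖X‖ / c1 := by
    intro n
    rw [abs_of_pos (inv_pos.mpr (hrpos n)), hr, inv_div]
    rw [div_le_div_iff₀ (hβpos n) hc1]
    have := hX1 n
    nlinarith [hαpos n, hβpos n]
  obtain ⟨D, hD⟩ := aux_diag r (‖Y‖ / c2) hub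
  obtain ⟨D', hD'⟩ := aux_diag (fun n => (r n)⁻¹) (‖X‖ / c1) hub'
  have h1 : ∀ f, D' (D f) = f := by
    intro f
    refine lp.ext (funext fun n => ?_)
    rw [hD', hD]
    rw [← mul_assoc, ← Complex.ofReal_mul, inv_mul_cancel₀ (hrpos n).ne', Complex.ofReal_one,
      one_mul]
  have h2 : ∀ f, D (D' f) = f := by
    intro f
    refine lp.ext (funext fun n => ?_)
    rw [hD, hD']
    rw [← mul_assoc, ← Complex.ofReal_mul, mul_inv_cancel₀ (hrpos n).ne', Complex.ofReal_one,
      one_mul]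
  set E : lp (fun _ : ℕ => ℂ) 2 ≃L[ℂ] lp (fun _ : ℕ => ℂ) 2 :=
    ContinuousLinearEquiv.equivOfInverse D D' h1 h2 with hE
  set bb : HilbertBasis ℕ ℂ H := HilbertBasis.mk he hdense.ge with hbb
  have hbbe : ∀ n, bb n = e n := fun n => congrFun (HilbertBasis.coe_mk he hdense.ge) n
  set V : H ≃L[ℂ] H :=
    bb.repr.toContinuousLinearEquiv.trans
      (E.trans bb.repr.symm.toContinuousLinearEquiv) with hV
  have hVapp : ∀ v, V v = bb.repr.symm (E (bb.repr v)) := fun v => rfl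
  have hDsingle : ∀ n, D (lp.single 2 n (1 : ℂ)) = (r n : ℂ) • lp.single 2 n (1 : ℂ) := by
    intro n
    refine lp.ext (funext fun k => ?_)
    rw [hD]
    have : ((r n : ℂ) • lp.single 2 n (1 : ℂ) : lp (fun _ : ℕ => ℂ) 2) k
        = (r n : ℂ) • (lp.single 2 n (1 : ℂ) : ∀ _ : ℕ, ℂ) k := by
      rw [lp.coeFn_smul]; rfl
    rw [this]
    by_cases hk : k = n
    · subst hk
      rw [lp.single_apply_self]
      simp [smul_eq_mul]
    · rw [lp.single_apply_ne 2 n _ hk]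
      simp
  have hVe : ∀ n, V (e n) = (r n : ℂ) • e n := by
    intro n
    rw [hVapp]
    rw [← hbbe n, bb.repr_self n, hE]
    show bb.repr.symm (D (lp.single 2 n 1)) = (r n : ℂ) • bb n
    rw [hDsingle n, map_smul, ← bb.repr_self n, LinearIsometryEquiv.symm_apply_apply]
  refine ⟨V, ?_⟩
  refine aux_ext e hdense _ _ fun n => ?_
  have hLHS : (V : H →L[ℂ] H) (A (e n)) = ((a n * r (n + 1) : ℝ) : ℂ) • e (n + 1) := by
    rw [hA n, map_smul]
    show (a n : ℂ) • V (e (n + 1)) = _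
    rw [hVe (n + 1), smul_smul]
    push_cast
    ring_nf
  have hRHS : B ((V : H →L[ℂ] H) (e n)) = ((r n * b n : ℝ) : ℂ) • e (n + 1) := by
    show B (V (e n)) = _
    rw [hVe n, map_smul, hB n, smul_smul]
    push_cast
    ring_nf
  have hscal : a n * r (n + 1) = r n * b n := by
    rw [hr]
    show a n * (β (n + 1) / α (n + 1)) = β n / α n * b n
    rw [hα, hβ]
    show a n * ((∏ k ∈ Finset.range (n + 1), b k) / ∏ k ∈ Finset.range (n + 1), a k)
        = (∏ k ∈ Finset.range n, b k) / (∏ k ∈ Finset.range n, a k) * b n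
    rw [Finset.prod_range_succ, Finset.prod_range_succ]
    have hane : (a n) ≠ 0 := (ha n).ne'
    have hpane : (∏ k ∈ Finset.range n, a k) ≠ 0 :=
      (Finset.prod_pos fun k _ => ha k).ne'
    field_simp
  simp only [ContinuousLinearMap.comp_apply]
  rw [hLHS, hRHS, hscal]
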